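/- Let f be a Schwartz function on ℝ^d, 0 < α < 2, and g = ∂_k f for some coordinate direction k. Suppose g attains a positive maximum at a point x̄ ∈ ℝ^d. Then there is a constant c = c(d,α) > 0 such that Λ^α g(x̄) ≥ g(x̄)^{1+α} / (c ‖f‖_{L^∞}^α). -/

import Mathlib

open MeasureTheory Filter Set

-- (A) coordinate vs norm bounds
lemma aux_abs_coord_le_norm {d : ℕ} (y : EuclideanSpace ℝ (Fin d)) (k : Fin d) : |y k| ≤ ‖y‖ := by
  rw [EuclideanSpace.norm_eq, ← Real.sqrt_sq_eq_abs]
  apply Real.sqrt_le_sqrt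
  have := Finset.single_le_sum (f := fun i => ‖y i‖^2) (fun i _ => by positivity) (Finset.mem_univ k)
  simpa [sq_abs] using this

lemma aux_norm_le {d : ℕ} (y : EuclideanSpace ℝ (Fin d)) (R : ℝ) (h : ∀ i, |y i| ≤ R)
    (hR : 0 ≤ R) : ‖y‖ ≤ d * R := by
  rw [EuclideanSpace.norm_eq]
  have h1 : ∑ i, ‖y i‖^2 ≤ (d:ℝ) * R^2 := by
    calc ∑ i, ‖y i‖^2 ≤ ∑ _i : Fin d, R^2 := by
          apply Finset.sum_le_sum; intro i _
          have := h i; simp only [Real.norm_eq_abs]; nlinarith [abs_nonneg (y i)]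
      _ = (d:ℝ) * R^2 := by simp [Finset.sum_const, mul_comm]
  calc Real.sqrt (∑ i, ‖y i‖^2) ≤ Real.sqrt ((d:ℝ) * R^2) := Real.sqrt_le_sqrt h1
    _ ≤ Real.sqrt (((d:ℝ)*R)^2) := by
        apply Real.sqrt_le_sqrt; rcases Nat.eq_zero_or_pos d with h0|h0
        · simp [h0]
        · have : (1:ℝ) ≤ d := by exact_mod_cast h0
          nlinarith
    _ = |(d:ℝ)*R| := Real.sqrt_sq_eq_abs _
    _ = (d:ℝ)*R := abs_of_nonneg (by positivity)

-- (B) integrability of the integrand on the exterior of a ball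
lemma aux_integrableOn (d : ℕ) (α : ℝ) (hα : 0 < α) (cdα M B : ℝ)
    (g : EuclideanSpace ℝ (Fin d) → ℝ) (hg : Continuous g) (hB : ∀ x, |g x| ≤ B)
    (ε : ℝ) (hε : 0 < ε) :
    IntegrableOn (fun y : EuclideanSpace ℝ (Fin d) =>
      cdα * (M - g y) / ‖y‖ ^ ((d:ℝ) + α)) {y | ε ≤ ‖y‖} := by
  set p : ℝ := (d:ℝ) + α with hp
  have hp0 : 0 < p := by positivity
  set C' : ℝ := |cdα| * (|M| + B) with hC'
  have hC'0 : 0 ≤ C' := by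
    have h0 := (abs_nonneg (g 0)).trans (hB 0)
    positivity
  have hint : Integrable (fun y : EuclideanSpace ℝ (Fin d) =>
      C' * (1 + ε⁻¹) ^ p * (1 + ‖y‖) ^ (-p)) := by
    apply Integrable.const_mul
    apply integrable_one_add_norm (E := EuclideanSpace ℝ (Fin d))
    rw [finrank_euclideanSpace_fin]
    simp only [hp]; linarith
  have hmeas : MeasurableSet {y : EuclideanSpace ℝ (Fin d) | ε ≤ ‖y‖} :=
    (isClosed_le continuous_const continuous_norm).measurableSet
  refine Integrable.mono' hint.integrableOn ?_ ?_
  · apply Measurable.aestronglyMeasurable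
    apply Measurable.div
    · exact (continuous_const.mul (continuous_const.sub hg)).measurable
    · exact (continuous_norm.rpow_const fun y => Or.inr hp0.le).measurable
  · rw [ae_restrict_iff' hmeas]
    filter_upwards with y hy
    have hy0 : 0 < ‖y‖ := lt_of_lt_of_le hε hy
    have hyp : 0 < ‖y‖ ^ p := Real.rpow_pos_of_pos hy0 _
    rw [Real.norm_eq_abs, abs_div, abs_of_nonneg hyp.le, div_le_iff₀ hyp]
    have hnum : |cdα * (M - g y)| ≤ C' := by
      rw [abs_mul, hC']
      have : |M - g y| ≤ |M| + B := (abs_sub _ _).trans (by linarith [hB y])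
      exact mul_le_mul_of_nonneg_left this (abs_nonneg _)
    have h1y : 1 + ‖y‖ ≤ (1 + ε⁻¹) * ‖y‖ := by
      have h2 : (1:ℝ) ≤ ε⁻¹ * ‖y‖ := by
        calc (1:ℝ) = ε⁻¹ * ε := (inv_mul_cancel₀ hε.ne').symm
          _ ≤ ε⁻¹ * ‖y‖ := mul_le_mul_of_nonneg_left hy (inv_pos.2 hε).le
      nlinarith [norm_nonneg y]
    set v : ℝ := (1 + ‖y‖) ^ p with hv
    set u : ℝ := (1 + ε⁻¹) ^ p * ‖y‖ ^ p with hu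
    have hv0 : 0 < v := Real.rpow_pos_of_pos (by positivity) _
    have huv : v ≤ u := by
      rw [hv, hu, ← Real.mul_rpow (by positivity) (norm_nonneg y)]
      exact Real.rpow_le_rpow (by positivity) h1y hp0.le
    have hrw : C' * (1 + ε⁻¹) ^ p * (1 + ‖y‖) ^ (-p) * ‖y‖ ^ p = C' * (u / v) := by
      rw [Real.rpow_neg (by positivity), hu, hv]; ring
    rw [hrw]
    calc |cdα * (M - g y)| ≤ C' := hnum
      _ = C' * 1 := (mul_one _).symm
      _ ≤ C' * (u / v) := mul_le_mul_of_nonneg_left ((one_le_div hv0).2 huv) hC'0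

-- (C) divergence theorem step
lemma aux_div_step (n : ℕ) (f : SchwartzMap (EuclideanSpace ℝ (Fin (n+1))) ℝ) (k : Fin (n+1))
    (xm : EuclideanSpace ℝ (Fin (n+1))) (S : ℝ) (hS : ∀ x, |f x| ≤ S)
    (a b : Fin (n+1) → ℝ) (hle : a ≤ b) :
    (∫ x in Icc a b, fderiv ℝ (⇑f) (xm - (EuclideanSpace.equiv (Fin (n+1)) ℝ).symm x)
        (EuclideanSpace.single k 1)) ≤
      2 * S * ∏ j : Fin n, (b (k.succAbove j) - a (k.succAbove j)) := by
  set T := (EuclideanSpace.equiv (Fin (n+1)) ℝ).symm with hT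
  set φ : (Fin (n+1) → ℝ) → ℝ := fun x => f (xm - T x) with hφ
  set g : EuclideanSpace ℝ (Fin (n+1)) → ℝ :=
    fun z => fderiv ℝ (⇑f) z (EuclideanSpace.single k 1) with hg
  set Dφ : (Fin (n+1) → ℝ) → ((Fin (n+1) → ℝ) →L[ℝ] ℝ) :=
    fun x => (fderiv ℝ (⇑f) (xm - T x)).comp (-(T : (Fin (n+1) → ℝ) →L[ℝ] _)) with hDφ
  have hTc : Continuous (⇑T) := T.continuous
  have hasφ : ∀ x, HasFDerivAt φ (Dφ x) x := by
    intro x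
    have hf : HasFDerivAt (⇑f) (fderiv ℝ (⇑f) (xm - T x)) (xm - T x) :=
      (f.differentiable.differentiableAt).hasFDerivAt
    have hT2 : HasFDerivAt (fun z => xm - T z) (-(T : (Fin (n+1) → ℝ) →L[ℝ] _)) x :=
      ((T : (Fin (n+1) → ℝ) →L[ℝ] _).hasFDerivAt).const_sub xm
    exact hf.comp x hT2
  have hφc : Continuous φ := f.continuous.comp (continuous_const.sub hTc)
  have hgc : Continuous g := by
    have h1 : Continuous (fun z => fderiv ℝ (⇑f) z) :=
      (f.smooth ⊤).continuous_fderiv (by simp)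
    exact (ContinuousLinearMap.apply ℝ ℝ (EuclideanSpace.single k (1:ℝ))).continuous.comp h1
  have hsingle : T (Pi.single k (1:ℝ)) = EuclideanSpace.single k 1 := rfl
  have hsingle' : (T : (Fin (n+1) → ℝ) →L[ℝ] EuclideanSpace ℝ (Fin (n+1)))
      (Pi.single k (1:ℝ)) = EuclideanSpace.single k 1 := rfl
  set F : Fin (n+1) → (Fin (n+1) → ℝ) → ℝ := fun i x => if i = k then φ x else 0 with hF
  set F' : Fin (n+1) → (Fin (n+1) → ℝ) → ((Fin (n+1) → ℝ) →L[ℝ] ℝ) :=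
    fun i x => if i = k then Dφ x else 0 with hF'
  have hdivg : (fun x : Fin (n+1) → ℝ => ∑ i, F' i x (Pi.single i 1)) =
      fun x => -(g (xm - T x)) := by
    funext x
    rw [Finset.sum_eq_single k]
    · simp only [hF', if_pos rfl, hDφ, ContinuousLinearMap.comp_apply,
        ContinuousLinearMap.neg_apply, ContinuousLinearMap.coe_coe, hsingle, hsingle',
        map_neg, hg]
    · intro i _ hik
      simp [hF', hik]
    · intro h; exact absurd (Finset.mem_univ k) h
  have key := integral_divergence_of_hasFDerivAt_off_countable' a b hle F F' ∅
    countable_empty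
    (fun i => by
      by_cases hik : i = k
      · subst hik; simpa [hF] using hφc.continuousOn
      · simpa [hF, hik] using continuousOn_const)
    (fun x _ i => by
      by_cases hik : i = k
      · subst hik; simpa [hF, hF'] using hasφ x
      · simpa [hF, hF', hik] using hasFDerivAt_const (0:ℝ) x)
    (by
      rw [IntegrableOn, hdivg]
      exact (((hgc.comp (continuous_const.sub hTc)).neg).continuousOn).integrableOn_compact
        isCompact_Icc)
  rw [hdivg] at key
  rw [Finset.sum_eq_single k ?h1 ?h2] at key
  case h1 =>
    intro i _ hik
    simp [hF, hik]
  case h2 => intro h; exact absurd (Finset.mem_univ k) h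
  simp only [hF, if_pos rfl] at key
  have key2 : (∫ x in Icc a b, g (xm - T x)) =
      (∫ x in Icc (a ∘ k.succAbove) (b ∘ k.succAbove), φ (k.insertNth (a k) x)) -
      (∫ x in Icc (a ∘ k.succAbove) (b ∘ k.succAbove), φ (k.insertNth (b k) x)) := by
    have := congrArg Neg.neg key
    rw [← integral_neg] at this
    simp only [neg_neg, neg_sub] at this
    exact this
  have hle' : (a ∘ k.succAbove) ≤ (b ∘ k.succAbove) := fun j => hle _
  have hvol : (volume (Icc (a ∘ k.succAbove) (b ∘ k.succAbove))).toReal =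
      ∏ j : Fin n, (b (k.succAbove j) - a (k.succAbove j)) := by
    rw [Real.volume_Icc_pi_toReal hle']; rfl
  have hbnd : ∀ c : ℝ, |∫ x in Icc (a ∘ k.succAbove) (b ∘ k.succAbove), φ (k.insertNth c x)| ≤
      S * ∏ j : Fin n, (b (k.succAbove j) - a (k.succAbove j)) := by
    intro c
    rw [← hvol, ← Real.norm_eq_abs]
    apply norm_setIntegral_le_of_norm_le_const (IsCompact.measure_lt_top isCompact_Icc)
    intro x _
    exact hS _
  calc (∫ x in Icc a b, g (xm - T x)) ≤
      |∫ x in Icc (a ∘ k.succAbove) (b ∘ k.succAbove), φ (k.insertNth (a k) x)| +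
      |∫ x in Icc (a ∘ k.succAbove) (b ∘ k.succAbove), φ (k.insertNth (b k) x)| := by
        rw [key2]
        have h1 := le_abs_self
          (∫ x in Icc (a ∘ k.succAbove) (b ∘ k.succAbove), φ (k.insertNth (a k) x))
        have h2 := neg_abs_le
          (∫ x in Icc (a ∘ k.succAbove) (b ∘ k.succAbove), φ (k.insertNth (b k) x))
        linarith
    _ ≤ S * (∏ j : Fin n, (b (k.succAbove j) - a (k.succAbove j))) +
        S * (∏ j : Fin n, (b (k.succAbove j) - a (k.succAbove j))) :=
          add_le_add (hbnd _) (hbnd _)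
    _ = 2 * S * ∏ j : Fin n, (b (k.succAbove j) - a (k.succAbove j)) := by ring


/-- **`L^∞` nonlinear lower bound.** Let `f` be a Schwartz function on `ℝ^d`,
`0 < α < 2`, and `g = ∂_k f`. If `g` attains a positive maximum at `xm`, then
there is a constant `c = c(d,α) > 0` with
`Λ^α g(xm) ≥ g(xm)^{1+α} / (c ‖f‖_{L^∞}^α)`, where `Λ^α g(xm)` is the value `L`
of the principal value integral `c_{d,α} P.V. ∫ (g(xm) - g(xm-y))/|y|^{d+α} dy`. -/
theorem stmt_6 (d : ℕ) (hd : 0 < d) (α : ℝ) (hα : 0 < α) (hα' : α < 2)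
    (cdα : ℝ) (hcdα : 0 < cdα) :
    ∃ c : ℝ, 0 < c ∧
      ∀ (f : SchwartzMap (EuclideanSpace ℝ (Fin d)) ℝ) (k : Fin d)
        (xm : EuclideanSpace ℝ (Fin d)) (L : ℝ),
        (∀ x, fderiv ℝ (⇑f) x (EuclideanSpace.single k 1) ≤
          fderiv ℝ (⇑f) xm (EuclideanSpace.single k 1)) →
        0 < fderiv ℝ (⇑f) xm (EuclideanSpace.single k 1) →
        Tendsto (fun ε : ℝ =>
            ∫ y in {y : EuclideanSpace ℝ (Fin d) | ε ≤ ‖y‖},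
              cdα * (fderiv ℝ (⇑f) xm (EuclideanSpace.single k 1) -
                fderiv ℝ (⇑f) (xm - y) (EuclideanSpace.single k 1)) /
                ‖y‖ ^ ((d : ℝ) + α))
          (nhdsWithin 0 (Set.Ioi 0)) (nhds L) →
        (fderiv ℝ (⇑f) xm (EuclideanSpace.single k 1)) ^ (1 + α) /
          (c * (⨆ x, |f x|) ^ α) ≤ L := by
  obtain ⟨n, rfl⟩ : ∃ n, d = n + 1 := ⟨d - 1, (Nat.succ_pred_eq_of_pos hd).symm⟩
  set p : ℝ := ((n+1 : ℕ) : ℝ) + α with hp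
  have hp0 : 0 < p := by positivity
  refine ⟨((n+1:ℕ):ℝ) ^ p * 8 ^ (1+α) / (cdα * 2 ^ (n+1)), by positivity, ?_⟩
  set c : ℝ := ((n+1:ℕ):ℝ) ^ p * 8 ^ (1+α) / (cdα * 2 ^ (n+1)) with hc
  have hc0 : 0 < c := by positivity
  intro f k xm L hmax hpos hL
  set g : EuclideanSpace ℝ (Fin (n+1)) → ℝ := fun x => fderiv ℝ (⇑f) x (EuclideanSpace.single k 1) with hgdef
  set M : ℝ := g xm with hM
  have hM0 : 0 < M := hpos
  have hgle : ∀ x, g x ≤ M := hmax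
  -- boundedness and continuity of g
  have hgc : Continuous g := by
    have h1 : Continuous (fun z => fderiv ℝ (⇑f) z) :=
      (f.smooth ⊤).continuous_fderiv (by simp)
    exact (ContinuousLinearMap.apply ℝ ℝ (EuclideanSpace.single k (1:ℝ))).continuous.comp h1
  obtain ⟨B, hB⟩ : ∃ B : ℝ, ∀ x, |g x| ≤ B := by
    obtain ⟨C, hC⟩ := (SchwartzMap.fderivCLM ℝ _ _ f).decay 0 0
    refine ⟨C, fun x => ?_⟩
    have h1 := hC.2 x
    simp only [pow_zero, one_mul, norm_iteratedFDeriv_zero] at h1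
    have h2 : ‖SchwartzMap.fderivCLM ℝ _ _ f x‖ = ‖fderiv ℝ (⇑f) x‖ := by
      rw [SchwartzMap.fderivCLM_apply]
    calc |g x| ≤ ‖fderiv ℝ (⇑f) x‖ * ‖EuclideanSpace.single k (1:ℝ)‖ :=
          (fderiv ℝ (⇑f) x).le_opNorm _
      _ ≤ C := by
          rw [EuclideanSpace.norm_single]; simp only [norm_one, mul_one]; rw [← h2]; exact h1
  -- the sup of |f|
  set S : ℝ := ⨆ x, |f x| with hS
  have hfS : ∀ x, |f x| ≤ S := by
    obtain ⟨C, hC⟩ := f.decay 0 0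
    have hbdd : BddAbove (Set.range fun x : EuclideanSpace ℝ (Fin (n+1)) => |f x|) := by
      refine ⟨C, ?_⟩
      rintro _ ⟨x, rfl⟩
      have := hC.2 x
      simpa [norm_iteratedFDeriv_zero] using this
    exact fun x => le_ciSup hbdd x
  have hS0 : 0 < S := by
    by_contra hcon
    push_neg at hcon
    have hf0 : ∀ x, f x = 0 := by
      intro x
      have := hfS x
      have := abs_nonneg (f x)
      have : |f x| = 0 := le_antisymm (by linarith) (abs_nonneg _)
      exact abs_eq_zero.mp this
    have hzero : fderiv ℝ (⇑f) xm (EuclideanSpace.single k 1) = 0 := by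
      have hf' : (⇑f) = fun _ : EuclideanSpace ℝ (Fin (n+1)) => (0:ℝ) := funext hf0
      rw [hf', fderiv_fun_const]
      simp
    rw [hzero] at hpos
    exact lt_irrefl 0 hpos
  set R : ℝ := 8 * S / M with hR
  have hR0 : 0 < R := by positivity
  -- integrability of the integrand on exteriors of balls
  have hInt : ∀ ε : ℝ, 0 < ε → IntegrableOn
      (fun y : EuclideanSpace ℝ (Fin (n+1)) => cdα * (M - g (xm - y)) / ‖y‖ ^ p) {y : EuclideanSpace ℝ (Fin (n+1)) | ε ≤ ‖y‖} := by
    intro ε hε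
    exact aux_integrableOn (n+1) α hα cdα M B (fun y => g (xm - y))
      (hgc.comp (continuous_const.sub continuous_id)) (fun y => hB _) ε hε
  -- nonnegativity of the integrand
  have hnonneg : ∀ y : EuclideanSpace ℝ (Fin (n+1)), 0 ≤ cdα * (M - g (xm - y)) / ‖y‖ ^ p := by
    intro y
    apply div_nonneg
    · exact mul_nonneg hcdα.le (by linarith [hgle (xm - y)])
    · positivity
  -- rewrite hL in terms of g, M, p
  have hLg : Tendsto (fun ε : ℝ => ∫ y in {y : EuclideanSpace ℝ (Fin (n+1)) | ε ≤ ‖y‖},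
      cdα * (M - g (xm - y)) / ‖y‖ ^ p) (nhdsWithin 0 (Set.Ioi 0)) (nhds L) := hL
  -- Step: L bounded below by integral over {R/2 ≤ ‖y‖}
  have hr0 : 0 < R / 2 := by positivity
  have step1 : (∫ y in {y : EuclideanSpace ℝ (Fin (n+1)) | R/2 ≤ ‖y‖}, cdα * (M - g (xm - y)) / ‖y‖ ^ p) ≤ L := by
    apply ge_of_tendsto hLg
    filter_upwards [Ioc_mem_nhdsGT_of_mem (Set.left_mem_Ico.2 hr0)] with ε hε
    apply setIntegral_mono_set (hInt ε hε.1)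
      (Eventually.of_forall fun y => hnonneg y)
    apply HasSubset.Subset.eventuallyLE
    intro y hy
    exact le_trans hε.2 hy
  -- the box
  set a : Fin (n+1) → ℝ := fun i => if i = k then R/2 else -R with ha
  set b : Fin (n+1) → ℝ := fun i => if i = k then R else R with hb
  have hab : a ≤ b := by
    intro i
    by_cases hik : i = k
    · subst hik; simp only [ha, hb, if_pos rfl]; linarith
    · simp only [ha, hb, if_neg hik]; linarith
  set e := (MeasurableEquiv.toLp 2 (Fin (n+1) → ℝ)).symm with he
  set D : Set (EuclideanSpace ℝ (Fin (n+1))) := e ⁻¹' (Icc a b) with hD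
  have hmemD : ∀ y : EuclideanSpace ℝ (Fin (n+1)), y ∈ D ↔ ∀ i, a i ≤ y i ∧ y i ≤ b i := by
    intro y
    rw [hD, mem_preimage, mem_Icc]
    constructor
    · rintro ⟨h1, h2⟩ i; exact ⟨h1 i, h2 i⟩
    · intro h; exact ⟨fun i => (h i).1, fun i => (h i).2⟩
  have hDsub : D ⊆ {y : EuclideanSpace ℝ (Fin (n+1)) | R/2 ≤ ‖y‖} := by
    intro y hy
    rw [hmemD] at hy
    have h1 := (hy k).1
    simp only [ha, if_pos rfl] at h1
    have h2 : |y k| ≤ ‖y‖ := aux_abs_coord_le_norm y k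
    have h3 : y k ≤ |y k| := le_abs_self _
    exact le_trans h1 (le_trans h3 h2)
  have hDnorm : ∀ y ∈ D, ‖y‖ ≤ ((n+1:ℕ):ℝ) * R := by
    intro y hy
    rw [hmemD] at hy
    apply aux_norm_le y R _ hR0.le
    intro i
    rcases hy i with ⟨h1, h2⟩
    by_cases hik : i = k
    · subst hik
      simp only [ha, hb, if_pos rfl] at h1 h2
      rw [abs_le]; constructor <;> linarith
    · simp only [ha, hb, if_neg hik] at h1 h2
      rw [abs_le]; exact ⟨h1, h2⟩
  have hDmeas : MeasurableSet D := e.measurable measurableSet_Icc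
  set T := (EuclideanSpace.equiv (Fin (n+1)) ℝ).symm with hT
  have hDim : D = ⇑T '' (Icc a b) := by
    ext y
    constructor
    · intro hy; exact ⟨e y, hy, rfl⟩
    · rintro ⟨z, hz, rfl⟩; exact hz
  have hDcomp : IsCompact D := by
    rw [hDim]; exact isCompact_Icc.image T.continuous
  have hDfin : volume D < ⊤ := hDcomp.measure_lt_top
  -- pieces of integrability on D
  have hcont2 : Continuous (fun y : EuclideanSpace ℝ (Fin (n+1)) => g (xm - y)) :=
    hgc.comp (continuous_const.sub continuous_id)
  have hIntD : IntegrableOn (fun y : EuclideanSpace ℝ (Fin (n+1)) => cdα * (M - g (xm - y)) / ‖y‖ ^ p) D :=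
    (hInt (R/2) hr0).mono_set hDsub
  set K : ℝ := (((n+1:ℕ):ℝ) * R) ^ p with hK
  have hK0 : 0 < K := by positivity
  have hIntq : IntegrableOn (fun y : EuclideanSpace ℝ (Fin (n+1)) => cdα / K * (M - g (xm - y))) D :=
    ((continuous_const.mul (continuous_const.sub hcont2)).continuousOn).integrableOn_compact
      hDcomp
  -- Step: integral over exterior ≥ integral over D
  have step2 : (∫ y in D, cdα * (M - g (xm - y)) / ‖y‖ ^ p) ≤
      ∫ y in {y : EuclideanSpace ℝ (Fin (n+1)) | R/2 ≤ ‖y‖}, cdα * (M - g (xm - y)) / ‖y‖ ^ p := by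
    apply setIntegral_mono_set (hInt (R/2) hr0)
      (Eventually.of_forall fun y => hnonneg y)
    exact HasSubset.Subset.eventuallyLE hDsub
  -- Step: lower bound the integrand on D
  have step3 : (∫ y in D, cdα / K * (M - g (xm - y))) ≤
      ∫ y in D, cdα * (M - g (xm - y)) / ‖y‖ ^ p := by
    apply setIntegral_mono_on hIntq hIntD hDmeas
    intro y hy
    have hy0 : 0 < ‖y‖ := lt_of_lt_of_le hr0 (hDsub hy)
    have hyp : 0 < ‖y‖ ^ p := Real.rpow_pos_of_pos hy0 _
    have hyK : ‖y‖ ^ p ≤ K := by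
      rw [hK]
      exact Real.rpow_le_rpow (norm_nonneg _) (hDnorm y hy) hp0.le
    rw [div_mul_eq_mul_div]
    apply div_le_div_of_nonneg_left (mul_nonneg hcdα.le (by linarith [hgle (xm - y)])) hyp hyK
  -- compute the q-integral
  have hvolD : (volume D).toReal = (R - R/2) * (2*R)^n := by
    have h1 : volume D = volume (Icc a b) :=
      (EuclideanSpace.volume_preserving_symm_measurableEquiv_toLp (Fin (n+1))).measure_preimage
        measurableSet_Icc.nullMeasurableSet
    rw [h1, Real.volume_Icc_pi_toReal hab]
    rw [← Finset.mul_prod_erase Finset.univ _ (Finset.mem_univ k)]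
    have h2 : b k - a k = R - R/2 := by simp [ha, hb]
    have h3 : ∀ i ∈ Finset.univ.erase k, b i - a i = 2*R := by
      intro i hi
      have hik := Finset.ne_of_mem_erase hi
      simp [ha, hb, hik]; ring
    rw [Finset.prod_congr rfl h3, Finset.prod_const, h2]
    congr 1
    rw [Finset.card_erase_of_mem (Finset.mem_univ k)]
    simp
  have hqint : (∫ y in D, cdα / K * (M - g (xm - y))) =
      cdα / K * (M * ((R - R/2) * (2*R)^n) - ∫ y in D, g (xm - y)) := by
    rw [MeasureTheory.integral_const_mul]
    congr 1
    rw [integral_sub (integrableOn_const hDfin.ne : IntegrableOn (fun _ : EuclideanSpace ℝ (Fin (n+1)) => M) D volume)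
      ((hcont2.continuousOn).integrableOn_compact hDcomp : IntegrableOn (fun y => g (xm - y)) D volume)]
    rw [setIntegral_const, measureReal_def, hvolD, smul_eq_mul, mul_comm]
  -- the divergence bound
  have hdiv : (∫ y in D, g (xm - y)) ≤ 2 * S * (2*R)^n := by
    have htrans : (∫ y in D, g (xm - y)) = ∫ z in Icc a b, g (xm - T z) := by
      exact (EuclideanSpace.volume_preserving_symm_measurableEquiv_toLp
        (Fin (n+1))).setIntegral_preimage_emb (MeasurableEquiv.measurableEmbedding _)
        (fun z => g (xm - T z)) (Icc a b)
    rw [htrans]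
    have := aux_div_step n f k xm S hfS a b hab
    rw [hT]
    refine le_trans this ?_
    have hprod : ∀ j : Fin n, b (k.succAbove j) - a (k.succAbove j) = 2*R := by
      intro j
      have hne : k.succAbove j ≠ k := Fin.succAbove_ne k j
      simp [ha, hb, hne]; ring
    rw [Finset.prod_congr rfl (fun j _ => hprod j), Finset.prod_const]
    simp
  -- final numeric computation
  have hfinal : M ^ (1 + α) / (c * S ^ α) ≤
      cdα / K * (M * ((R - R/2) * (2*R)^n) - 2 * S * (2*R)^n) := by
    have hMR : M * R = 8 * S := by rw [hR]; field_simp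
    have hMα : (0:ℝ) < M ^ α := Real.rpow_pos_of_pos hM0 α
    have hSα : (0:ℝ) < S ^ α := Real.rpow_pos_of_pos hS0 α
    have hN : (0:ℝ) < ((n+1:ℕ):ℝ) := by positivity
    have hNp : (0:ℝ) < ((n+1:ℕ):ℝ) ^ p := Real.rpow_pos_of_pos hN p
    have h8 : (0:ℝ) < (8:ℝ) ^ (1+α) := Real.rpow_pos_of_pos (by norm_num) _
    have hRn : (0:ℝ) < R ^ n := by positivity
    have hM1α : M ^ (1+α) = M * M ^ α := by rw [Real.rpow_add hM0, Real.rpow_one]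
    have hS1α : S ^ (1+α) = S * S ^ α := by rw [Real.rpow_add hS0, Real.rpow_one]
    have hKform : K = ((n+1:ℕ):ℝ) ^ p * (R ^ n * (8 ^ (1+α) * (S * S ^ α) / (M * M ^ α))) := by
      rw [hK, Real.mul_rpow hN.le hR0.le]
      congr 1
      have hpsplit : p = (n:ℝ) + (1+α) := by rw [hp]; push_cast; ring
      rw [hpsplit, Real.rpow_add hR0, Real.rpow_natCast]
      congr 1
      rw [hR, Real.div_rpow (by positivity) hM0.le, Real.mul_rpow (by norm_num) hS0.le,
        hM1α, hS1α]
    have hrhs : M * ((R - R/2) * (2*R)^n) - 2 * S * (2*R)^n = 2 * S * (2*R)^n := by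
      have e1 : M * ((R - R/2) * (2*R)^n) = (M*R) * (2*R)^n / 2 := by ring
      rw [e1, hMR]; ring
    rw [hrhs]
    apply le_of_eq
    rw [hM1α, hc, hKform, mul_pow]
    field_simp
    ring
  -- chain everything
  show M ^ (1 + α) / (c * S ^ α) ≤ L
  calc M ^ (1 + α) / (c * S ^ α)
      ≤ cdα / K * (M * ((R - R/2) * (2*R)^n) - 2 * S * (2*R)^n) := hfinal
    _ ≤ cdα / K * (M * ((R - R/2) * (2*R)^n) - ∫ y in D, g (xm - y)) := by
        apply mul_le_mul_of_nonneg_left _ (by positivity)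
        linarith
    _ = ∫ y in D, cdα / K * (M - g (xm - y)) := hqint.symm
    _ ≤ ∫ y in D, cdα * (M - g (xm - y)) / ‖y‖ ^ p := step3
    _ ≤ ∫ y in {y : EuclideanSpace ℝ (Fin (n+1)) | R/2 ≤ ‖y‖}, cdα * (M - g (xm - y)) / ‖y‖ ^ p := step2
    _ ≤ L := step1
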